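/- arXiv:2105.11126 — 5 statements merged into one kernel-verified Lean document; each statement's English description precedes it below -/
import Mathlib

section
/- For i.i.d. random variables X_1,...,X_n each following the Laplace distribution with scale b, let Y = X_1 + ... + X_n. Then for any v ≥ b√n and any λ with 0 < λ < 2√2·v²/b, we have P(Y > λ) ≤ exp(−λ²/(8v²)). -/
open MeasureTheory ProbabilityTheory Real

/-- The Laplace distribution `Lap(b)` with density `(1/(2b)) exp(-|x|/b)`. -/
noncomputable def laplaceMeasure (b : ℝ) : Measure ℝ :=
  MeasureTheory.volume.withDensity (fun x => ENNReal.ofReal ((1 / (2 * b)) * Real.exp (-|x| / b)))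

open Set
open scoped ENNReal NNReal

lemma aux_integral_exp_neg_mul_Ioi {c : ℝ} (hc : 0 < c) :
    ∫ x in Ioi (0:ℝ), exp (-(c * x)) = 1 / c := by
  have h := integral_comp_mul_left_Ioi (fun x => exp (-x)) 0 hc
  simp only [mul_zero, integral_exp_neg_Ioi_zero, smul_eq_mul, mul_one] at h
  rw [h, one_div]

lemma aux_integral_exp_mul_Iic {c : ℝ} (hc : 0 < c) :
    ∫ x in Iic (0:ℝ), exp (c * x) = 1 / c := by
  have h := integral_comp_neg_Iic (0:ℝ) (fun x => exp (-(c * x)))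
  simp only [mul_neg, neg_neg, neg_zero] at h
  rw [h, aux_integral_exp_neg_mul_Ioi hc]

lemma aux_integrableOn_exp_mul_Iic {c : ℝ} (hc : 0 < c) :
    IntegrableOn (fun x => exp (c * x)) (Iic (0:ℝ)) := by
  rw [← Measure.map_neg_eq_self (volume : Measure ℝ)]
  have m : MeasurableEmbedding fun x : ℝ => -x := (Homeomorph.neg ℝ).measurableEmbedding
  rw [m.integrableOn_map_iff]
  simp_rw [Function.comp_def, neg_preimage, neg_Iic, neg_zero, mul_neg, ← neg_mul]
  exact (integrableOn_Ici_iff_integrableOn_Ioi enorm_ne_top).mpr (exp_neg_integrableOn_Ioi 0 hc)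

lemma laplace_exp_key {b t : ℝ} (hb : 0 < b) (ht : |t| < 1 / b) :
    Integrable (fun x => exp (t * x)) (laplaceMeasure b) ∧
      ∫ x, exp (t * x) ∂(laplaceMeasure b) = 1 / (1 - b ^ 2 * t ^ 2) := by
  have hc1 : 0 < 1 / b - t := by
    have := abs_lt.mp ht; linarith [this.2]
  have hc2 : 0 < 1 / b + t := by
    have := abs_lt.mp ht; linarith [this.1]
  set d : ℝ → ℝ := fun x => (1 / (2 * b)) * Real.exp (-|x| / b) with hd
  have hd0 : ∀ x, 0 ≤ d x := fun x => by positivity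
  have hdmeas : Measurable fun x => (d x).toNNReal :=
    ((measurable_abs.neg.div_const b).exp.const_mul _).real_toNNReal
  have hmeq : laplaceMeasure b
      = volume.withDensity (fun x => ((d x).toNNReal : ℝ≥0∞)) := by
    simp only [laplaceMeasure, ENNReal.ofReal]
    rfl
  -- the real integrand over volume
  have hsmul : ∀ x : ℝ, (d x).toNNReal • exp (t * x) = d x * exp (t * x) := by
    intro x
    simp [NNReal.smul_def, Real.coe_toNNReal _ (hd0 x)]
  -- integrability on the two half lines
  have heqIoi : EqOn (fun x => d x * exp (t * x))
      (fun x => (1 / (2 * b)) * exp (-((1 / b - t) * x))) (Ioi 0) := by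
    intro x hx
    have : |x| = x := abs_of_pos hx
    simp only [hd, this, ← Real.exp_add, mul_assoc]
    ring_nf
  have heqIic : EqOn (fun x => d x * exp (t * x))
      (fun x => (1 / (2 * b)) * exp ((1 / b + t) * x)) (Iic 0) := by
    intro x hx
    have : |x| = -x := abs_of_nonpos hx
    simp only [hd, this, ← Real.exp_add, mul_assoc]
    ring_nf
  have hIoi : IntegrableOn (fun x => d x * exp (t * x)) (Ioi 0) := by
    refine IntegrableOn.congr_fun ?_ heqIoi.symm measurableSet_Ioi
    refine Integrable.const_mul ?_ _
    simpa only [neg_mul, IntegrableOn] using exp_neg_integrableOn_Ioi 0 hc1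
  have hIic : IntegrableOn (fun x => d x * exp (t * x)) (Iic 0) := by
    refine IntegrableOn.congr_fun ?_ heqIic.symm measurableSet_Iic
    exact Integrable.const_mul (aux_integrableOn_exp_mul_Iic hc2) _
  have hint : Integrable (fun x => d x * exp (t * x)) volume := by
    rw [← integrableOn_univ, ← Iic_union_Ioi (a := (0:ℝ))]
    exact hIic.union hIoi
  have hint' : Integrable (fun x => exp (t * x)) (laplaceMeasure b) := by
    rw [hmeq, integrable_withDensity_iff_integrable_smul hdmeas]
    exact hint.congr (Filter.Eventually.of_forall fun x => (hsmul x).symm)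
  refine ⟨hint', ?_⟩
  rw [hmeq, integral_withDensity_eq_integral_smul hdmeas]
  simp_rw [hsmul]
  rw [← intervalIntegral.integral_Iic_add_Ioi hIic hIoi]
  rw [setIntegral_congr_fun measurableSet_Iic heqIic,
      setIntegral_congr_fun measurableSet_Ioi heqIoi,
      integral_const_mul, integral_const_mul,
      aux_integral_exp_mul_Iic hc2, aux_integral_exp_neg_mul_Ioi hc1]
  have hb' : b ≠ 0 := hb.ne'
  have hne : 1 - b ^ 2 * t ^ 2 ≠ 0 := by
    have : |b * t| < 1 := by
      rw [abs_mul, abs_of_pos hb]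
      calc b * |t| < b * (1 / b) := by exact (mul_lt_mul_iff_right₀ hb).mpr ht
        _ = 1 := by field_simp
    have h2 : (b * t) ^ 2 < 1 := by nlinarith [abs_nonneg (b * t), sq_abs (b * t)]
    nlinarith
  have h1 : 0 < 1 + b * t := by
    have h := mul_pos hb hc2
    rw [mul_add, mul_one_div, div_self hb'] at h; linarith
  have h2 : 0 < 1 - b * t := by
    have h := mul_pos hb hc1
    rw [mul_sub, mul_one_div, div_self hb'] at h; linarith
  have hfac : 1 - b ^ 2 * t ^ 2 = (1 - b * t) * (1 + b * t) := by ring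
  have e1 : 1 / b + t = (1 + b * t) / b := by field_simp
  have e2 : 1 / b - t = (1 - b * t) / b := by field_simp
  rw [hfac, e1, e2, one_div_div, one_div_div,
    eq_div_iff (by positivity : (0:ℝ) < (1 - b * t) * (1 + b * t)).ne']
  field_simp
  ring

set_option maxHeartbeats 1000000 in
/-- Concentration of sums of i.i.d. Laplace random variables. -/
theorem stmt_0 {Ω : Type*} [MeasureSpace Ω] [IsProbabilityMeasure (ℙ : Measure Ω)]
    (n : ℕ) (b : ℝ) (hb : 0 < b) (X : Fin n → Ω → ℝ)
    (hmeas : ∀ i, Measurable (X i))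
    (hindep : iIndepFun X ℙ)
    (hlaw : ∀ i, Measure.map (X i) ℙ = laplaceMeasure b)
    (v lam : ℝ) (hv : b * Real.sqrt n ≤ v)
    (hlam0 : 0 < lam) (hlam1 : lam < 2 * Real.sqrt 2 * v ^ 2 / b) :
    ℙ {ω | lam < ∑ i, X i ω} ≤ ENNReal.ofReal (Real.exp (-(lam ^ 2) / (8 * v ^ 2))) := by
  have hsq2 : (0:ℝ) < Real.sqrt 2 := Real.sqrt_pos.mpr (by norm_num)
  have hsq2' : Real.sqrt 2 * Real.sqrt 2 = 2 := Real.mul_self_sqrt (by norm_num)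
  have hvnn : 0 ≤ v := le_trans (by positivity) hv
  have hv0 : 0 < v := by
    rcases hvnn.lt_or_eq with h | h
    · exact h
    · exfalso; rw [← h] at hlam1; norm_num at hlam1; linarith
  obtain ⟨t, htdef⟩ : ∃ t : ℝ, t = lam / (4 * v ^ 2) := ⟨_, rfl⟩
  have ht0 : 0 < t := by rw [htdef]; positivity
  have hlb : lam * b < 2 * Real.sqrt 2 * v ^ 2 := by
    rw [lt_div_iff₀ hb] at hlam1
    linarith
  have hbt : b * t < 1 / Real.sqrt 2 := by
    have hbtv : b * t = (b * lam) / (4 * v ^ 2) := by rw [htdef]; ring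
    rw [hbtv, div_lt_div_iff₀ (by positivity) hsq2]
    nlinarith
  have hbt2 : b ^ 2 * t ^ 2 ≤ 1 / 2 := by
    have h1 : (b * t) ^ 2 < (1 / Real.sqrt 2) ^ 2 :=
      pow_lt_pow_left₀ hbt (by positivity) two_ne_zero
    have h2 : (1 / Real.sqrt 2) ^ 2 = 1 / 2 := by
      rw [div_pow, one_pow, sq, hsq2']
    nlinarith
  have hone_le : (1:ℝ) ≤ Real.sqrt 2 := by nlinarith
  have htb : |t| < 1 / b := by
    rw [abs_of_pos ht0, lt_div_iff₀ hb]
    have : b * t < 1 := lt_of_lt_of_le hbt (by rw [div_le_one hsq2]; exact hone_le)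
    linarith
  have key := laplace_exp_key hb htb
  have hmgf_i : ∀ i, mgf (X i) ℙ t = 1 / (1 - b ^ 2 * t ^ 2) := by
    intro i
    calc mgf (X i) ℙ t = ∫ ω, Real.exp (t * X i ω) ∂ℙ := rfl
      _ = ∫ x, Real.exp (t * x) ∂(Measure.map (X i) ℙ) :=
        (integral_map (hmeas i).aemeasurable
          ((measurable_const.mul measurable_id).exp).aestronglyMeasurable).symm
      _ = 1 / (1 - b ^ 2 * t ^ 2) := by rw [hlaw i]; exact key.2
  have hint_i : ∀ i, Integrable (fun ω => Real.exp (t * X i ω)) ℙ := by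
    intro i
    have k := key.1
    rw [← hlaw i] at k
    exact (integrable_map_measure
      ((measurable_const.mul measurable_id).exp).aestronglyMeasurable
      (hmeas i).aemeasurable).mp k
  have hY_int : Integrable (fun ω => Real.exp (t * (∑ i, X i) ω)) ℙ :=
    hindep.integrable_exp_mul_sum hmeas (fun i _ => hint_i i)
  have chernoff := measure_ge_le_exp_mul_mgf (X := ∑ i, X i) (μ := ℙ) lam ht0.le hY_int
  have hmgf_sum : mgf (∑ i, X i) ℙ t = (1 / (1 - b ^ 2 * t ^ 2)) ^ n := by
    rw [hindep.mgf_sum hmeas]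
    simp [hmgf_i]
  have hx : (0:ℝ) ≤ b ^ 2 * t ^ 2 := by positivity
  have hden : 0 < 1 - b ^ 2 * t ^ 2 := by linarith
  have hone : 1 / (1 - b ^ 2 * t ^ 2) ≤ Real.exp (2 * (b ^ 2 * t ^ 2)) := by
    have h1 : 1 / (1 - b ^ 2 * t ^ 2) ≤ 1 + 2 * (b ^ 2 * t ^ 2) := by
      rw [div_le_iff₀ hden]; nlinarith
    exact h1.trans (by linarith [Real.add_one_le_exp (2 * (b ^ 2 * t ^ 2))])
  have hpow : (1 / (1 - b ^ 2 * t ^ 2)) ^ n ≤ Real.exp (2 * (b ^ 2 * t ^ 2) * n) := by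
    calc (1 / (1 - b ^ 2 * t ^ 2)) ^ n ≤ (Real.exp (2 * (b ^ 2 * t ^ 2))) ^ n :=
          pow_le_pow_left₀ (by positivity) hone n
      _ = Real.exp (2 * (b ^ 2 * t ^ 2) * n) := by
          rw [← Real.exp_nat_mul]; ring_nf
  have hnb : b ^ 2 * (n:ℝ) ≤ v ^ 2 := by
    nlinarith [mul_le_mul hv hv (by positivity : (0:ℝ) ≤ b * Real.sqrt n) hvnn,
      Real.mul_self_sqrt (Nat.cast_nonneg n : (0:ℝ) ≤ (n:ℝ)), Real.sqrt_nonneg (n:ℝ)]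
  have hfinal : Real.exp (-t * lam) * (1 / (1 - b ^ 2 * t ^ 2)) ^ n
      ≤ Real.exp (-(lam ^ 2) / (8 * v ^ 2)) := by
    calc Real.exp (-t * lam) * (1 / (1 - b ^ 2 * t ^ 2)) ^ n
        ≤ Real.exp (-t * lam) * Real.exp (2 * (b ^ 2 * t ^ 2) * n) :=
          mul_le_mul_of_nonneg_left hpow (Real.exp_nonneg _)
      _ = Real.exp (-t * lam + 2 * (b ^ 2 * t ^ 2) * n) := (Real.exp_add _ _).symm
      _ ≤ Real.exp (-(lam ^ 2) / (8 * v ^ 2)) := by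
          apply Real.exp_le_exp.mpr
          have h2 : 2 * (b ^ 2 * t ^ 2) * n ≤ 2 * v ^ 2 * t ^ 2 := by
            have := mul_le_mul_of_nonneg_right hnb (sq_nonneg t)
            nlinarith
          have h3 : -t * lam + 2 * v ^ 2 * t ^ 2 = -(lam ^ 2) / (8 * v ^ 2) := by
            rw [htdef]; field_simp; ring
          linarith
  have hle : (ℙ {ω | lam ≤ (∑ i, X i) ω}).toReal ≤ Real.exp (-(lam ^ 2) / (8 * v ^ 2)) := by
    calc (ℙ {ω | lam ≤ (∑ i, X i) ω}).toReal
        ≤ Real.exp (-t * lam) * mgf (∑ i, X i) ℙ t := chernoff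
      _ = Real.exp (-t * lam) * (1 / (1 - b ^ 2 * t ^ 2)) ^ n := by rw [hmgf_sum]
      _ ≤ _ := hfinal
  have hsub : ℙ {ω | lam < ∑ i, X i ω} ≤ ℙ {ω | lam ≤ (∑ i, X i) ω} := by
    apply measure_mono
    intro ω hω
    show lam ≤ (∑ i, X i) ω
    rw [Finset.sum_apply]
    exact le_of_lt hω
  exact le_trans hsub ((ENNReal.le_ofReal_iff_toReal_le (measure_ne_top _ _)
    (Real.exp_nonneg _)).mpr hle)
end

section
/- Adding Laplace noise with scale Δf/ε to a real-valued function f with L1-sensitivity Δf yields an ε-differentially private mechanism: for any x, x' with |f(x) − f(x')| ≤ Δf and any measurable set U ⊆ ℝ, P(f(x) + Lap(Δf/ε) ∈ U) ≤ e^ε · P(f(x') + Lap(Δf/ε) ∈ U). -/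
open MeasureTheory Real

/-- The Laplace mechanism with scale `Δf/ε` is ε-differentially private. -/
theorem stmt_4 {X : Type*} (ε Δf : ℝ) (hε : 0 < ε) (hΔf : 0 < Δf)
    (f : X → ℝ) (x x' : X) (hsens : |f x - f x'| ≤ Δf)
    (U : Set ℝ) (hU : MeasurableSet U) :
    (laplaceMeasure (Δf / ε)).map (fun z => f x + z) U ≤
      ENNReal.ofReal (Real.exp ε) * (laplaceMeasure (Δf / ε)).map (fun z => f x' + z) U := by
  set b := Δf / ε with hb_def
  have hb : 0 < b := div_pos hΔf hε
  set g : ℝ → ENNReal := fun z => ENNReal.ofReal ((1 / (2 * b)) * Real.exp (-|z| / b)) with hg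
  have hgm : Measurable g := by
    apply Measurable.ennreal_ofReal
    exact (Real.measurable_exp.comp ((measurable_id.abs.neg).div_const b)).const_mul _
  set c := f x
  set c' := f x'
  set d := c' - c with hd_def
  set S : Set ℝ := (fun z => c + z) ⁻¹' U with hS_def
  set S' : Set ℝ := (fun z => c' + z) ⁻¹' U with hS'_def
  have hS : MeasurableSet S := (measurable_const_add c) hU
  have hS' : MeasurableSet S' := (measurable_const_add c') hU
  have hdabs : |d| ≤ Δf := by
    rw [hd_def]
    rw [abs_sub_comm] at hsens
    exact hsens
  have key : ∀ z : ℝ, S.indicator g (z + d) ≤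
      ENNReal.ofReal (Real.exp ε) * S'.indicator g z := by
    intro z
    have hmem : z + d ∈ S ↔ z ∈ S' := by
      have hce : c + (z + d) = c' + z := by rw [hd_def]; ring
      simp only [hS_def, hS'_def, Set.mem_preimage, hce]
    by_cases hz : z ∈ S'
    · rw [Set.indicator_of_mem (hmem.mpr hz), Set.indicator_of_mem hz, hg]
      simp only
      rw [← ENNReal.ofReal_mul (Real.exp_pos ε).le]
      apply ENNReal.ofReal_le_ofReal
      have h1 : |z| ≤ |z + d| + |d| := by
        calc |z| = |(z + d) + (-d)| := by ring_nf
        _ ≤ |z + d| + |(-d)| := abs_add_le _ _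
        _ = |z + d| + |d| := by rw [abs_neg]
      have h2 : -|z + d| / b ≤ -|z| / b + ε := by
        have h3 : -|z + d| ≤ -|z| + Δf := by linarith
        have h4 : -|z + d| / b ≤ (-|z| + Δf) / b := by gcongr
        have h5 : (-|z| + Δf) / b = -|z| / b + ε := by
          rw [hb_def]; field_simp
        linarith
      have h6 : Real.exp (-|z + d| / b) ≤ Real.exp ε * Real.exp (-|z| / b) := by
        rw [← Real.exp_add]
        exact Real.exp_le_exp.mpr (by linarith)
      have hc : (0:ℝ) ≤ 1 / (2 * b) := by positivity
      calc 1 / (2 * b) * Real.exp (-|z + d| / b)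
          ≤ 1 / (2 * b) * (Real.exp ε * Real.exp (-|z| / b)) := by
            exact mul_le_mul_of_nonneg_left h6 hc
        _ = Real.exp ε * (1 / (2 * b) * Real.exp (-|z| / b)) := by ring
    · rw [Set.indicator_of_notMem (fun h => hz (hmem.mp h)),
        Set.indicator_of_notMem hz]
      simp
  have hmapL : (laplaceMeasure b).map (fun z => c + z) U = ∫⁻ z, S.indicator g z := by
    rw [Measure.map_apply (measurable_const_add c) hU, laplaceMeasure,
      withDensity_apply _ hS]
    exact (lintegral_indicator hS g).symm
  have hmapR : (laplaceMeasure b).map (fun z => c' + z) U = ∫⁻ z, S'.indicator g z := by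
    rw [Measure.map_apply (measurable_const_add c') hU, laplaceMeasure,
      withDensity_apply _ hS']
    exact (lintegral_indicator hS' g).symm
  calc (laplaceMeasure b).map (fun z => c + z) U
      = ∫⁻ z, S.indicator g z := hmapL
    _ = ∫⁻ z, S.indicator g (z + d) := (lintegral_add_right_eq_self (S.indicator g) d).symm
    _ ≤ ∫⁻ z, ENNReal.ofReal (Real.exp ε) * S'.indicator g z := lintegral_mono key
    _ = ENNReal.ofReal (Real.exp ε) * ∫⁻ z, S'.indicator g z :=
        lintegral_const_mul _ (hgm.indicator hS')
    _ = ENNReal.ofReal (Real.exp ε) * (laplaceMeasure b).map (fun z => c' + z) U := by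
        rw [hmapR]
end

section
/- The Gaussian mechanism M(D) = f(D) + N(0, σ²) with σ > (Δf/ε)·√(2·log(1.25/δ)) satisfies (ε, δ)-differential privacy, where Δf = max over neighboring D, D' of |f(D) − f(D')| (L2 sensitivity for real-valued f), for any ε ∈ (0,1) and δ ∈ (0,1). -/
open MeasureTheory ProbabilityTheory Real
open scoped NNReal ENNReal

lemma gauss_neg_inv {v : ℝ≥0} (hv : v ≠ 0) {S : Set ℝ} (hS : MeasurableSet S) :
    gaussianReal 0 v (Neg.neg ⁻¹' S) = gaussianReal 0 v S := by
  have h1 : (fun x : ℝ => -x) = (fun x : ℝ => (-1 : ℝ) * x) := by ext x; ring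
  have h2 : (gaussianReal 0 v).map (fun x : ℝ => -x) = gaussianReal 0 v := by
    rw [h1, gaussianReal_map_const_mul]
    have : (NNReal.mk ((-1 : ℝ) ^ 2) (sq_nonneg _)) = 1 := by
      ext; norm_num
    rw [this]; norm_num
  conv_rhs => rw [← h2]
  rw [Measure.map_apply measurable_neg hS]

lemma gauss_half {v : ℝ≥0} (hv : v ≠ 0) (m : ℝ) :
    gaussianReal m v (Set.Ici m) = 1 / 2 := by
  have hmap : gaussianReal m v (Set.Ici m) = gaussianReal 0 v (Set.Ici 0) := by
    have : gaussianReal m v = (gaussianReal 0 v).map (m + ·) := by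
      rw [gaussianReal_map_const_add, zero_add]
    rw [this, Measure.map_apply (measurable_const_add m) measurableSet_Ici]
    congr 1
    ext z
    simp [Set.mem_Ici]
  rw [hmap]
  have hsymm : gaussianReal 0 v (Set.Iic 0) = gaussianReal 0 v (Set.Ici 0) := by
    have : (Set.Iic (0:ℝ)) = Neg.neg ⁻¹' (Set.Ici 0) := by
      ext x; simp
    rw [this, gauss_neg_inv hv measurableSet_Ici]
  have hsing : gaussianReal 0 v ({0} : Set ℝ) = 0 := by
    refine gaussianReal_absolutelyContinuous 0 hv ?_
    simp
  have hunion : gaussianReal 0 v (Set.Iic 0 ∪ Set.Ici 0)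
      + gaussianReal 0 v (Set.Iic 0 ∩ Set.Ici 0)
      = gaussianReal 0 v (Set.Iic 0) + gaussianReal 0 v (Set.Ici 0) :=
    measure_union_add_inter' measurableSet_Iic _
  rw [Set.Iic_union_Ici, Set.Iic_inter_Ici, Set.Icc_self, hsing, measure_univ, add_zero,
    hsymm] at hunion
  have h2 : (2 : ℝ≥0∞) * gaussianReal 0 v (Set.Ici 0) = 1 := by
    rw [two_mul]; exact hunion.symm
  rw [ENNReal.eq_div_iff (by norm_num) (by norm_num)]
  exact h2

lemma coe_pos_of_ne {v : ℝ≥0} (hv : v ≠ 0) : (0:ℝ) < v :=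
  NNReal.coe_pos.2 (pos_iff_ne_zero.2 hv)

lemma gauss_tail_nonneg {v : ℝ≥0} (hv : v ≠ 0) {t : ℝ} (ht : 0 ≤ t) :
    gaussianReal 0 v (Set.Ici t) ≤ ENNReal.ofReal (rexp (-t^2 / (2*v)) * (1/2)) := by
  have hv0 : (0:ℝ) < v := coe_pos_of_ne hv
  have hint : ∫ x in Set.Ici t, gaussianPDFReal t v x = 1/2 := by
    have hhalf := gauss_half hv t
    rw [gaussianReal_apply_eq_integral t hv] at hhalf
    have h0 : 0 ≤ ∫ x in Set.Ici t, gaussianPDFReal t v x :=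
      integral_nonneg fun x => gaussianPDFReal_nonneg _ _ _
    have := congrArg ENNReal.toReal hhalf
    rwa [ENNReal.toReal_ofReal h0, show ((1:ℝ≥0∞)/2).toReal = 1/2 by norm_num] at this
  rw [gaussianReal_apply_eq_integral 0 hv]
  apply ENNReal.ofReal_le_ofReal
  have hmono : ∫ x in Set.Ici t, gaussianPDFReal 0 v x
      ≤ ∫ x in Set.Ici t, rexp (-t^2 / (2*v)) * gaussianPDFReal t v x := by
    refine setIntegral_mono_on (integrable_gaussianPDFReal 0 v).integrableOn
      (((integrable_gaussianPDFReal t v).const_mul _).integrableOn) measurableSet_Ici ?_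
    intro x hx
    simp only [Set.mem_Ici] at hx
    unfold gaussianPDFReal
    have hkey : rexp (-(x - 0)^2 / (2*v)) ≤ rexp (-(x - t)^2 / (2*v)) * rexp (-t^2 / (2*v)) := by
      rw [← Real.exp_add]
      refine Real.exp_le_exp.2 ?_
      rw [← add_div, div_le_div_iff₀ (by positivity) (by positivity)]
      nlinarith [mul_nonneg (mul_nonneg ht (sub_nonneg.2 hx)) hv0.le]
    refine le_trans (mul_le_mul_of_nonneg_left hkey (by positivity)) (le_of_eq (by ring))
  rw [integral_const_mul, hint] at hmono
  exact hmono

lemma gauss_tail_negt {v : ℝ≥0} (hv : v ≠ 0) {t : ℝ} (ht : t < 0) :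
    gaussianReal 0 v (Set.Ici t) ≤ ENNReal.ofReal (1/2 + (-t) * (Real.sqrt (2*π*v))⁻¹) := by
  have hv0 : (0:ℝ) < v := coe_pos_of_ne hv
  have hsub : Set.Ici t ⊆ Set.Ico t 0 ∪ Set.Ici 0 := by
    intro x hx
    by_cases h : x < 0
    · exact Or.inl ⟨hx, h⟩
    · exact Or.inr (le_of_not_gt h)
  have h1 : gaussianReal 0 v (Set.Ico t 0) ≤ ENNReal.ofReal ((-t) * (Real.sqrt (2*π*v))⁻¹) := by
    rw [gaussianReal_apply_eq_integral 0 hv]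
    apply ENNReal.ofReal_le_ofReal
    have hmono : ∫ x in Set.Ico t 0, gaussianPDFReal 0 v x
        ≤ ∫ _x in Set.Ico t 0, (Real.sqrt (2*π*v))⁻¹ := by
      refine setIntegral_mono_on (integrable_gaussianPDFReal 0 v).integrableOn
        (integrableOn_const (by rw [Real.volume_Ico]; exact ENNReal.ofReal_ne_top))
        measurableSet_Ico ?_
      intro x _
      unfold gaussianPDFReal
      refine mul_le_of_le_one_right (by positivity) (Real.exp_le_one_iff.2 ?_)
      apply div_nonpos_of_nonpos_of_nonneg
      · simp [sq_nonneg]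
      · positivity
    rwa [setIntegral_const, measureReal_def, Real.volume_Ico, ENNReal.toReal_ofReal (by linarith),
      zero_sub, smul_eq_mul] at hmono
  have h2 : gaussianReal 0 v (Set.Ici 0) = ENNReal.ofReal (1/2) := by
    rw [gauss_half hv 0, show (1/2:ℝ) = (2:ℝ)⁻¹ by norm_num,
      ENNReal.ofReal_inv_of_pos two_pos, ENNReal.ofReal_ofNat]
    norm_num
  calc gaussianReal 0 v (Set.Ici t) ≤ gaussianReal 0 v (Set.Ico t 0 ∪ Set.Ici 0) :=
        measure_mono hsub
    _ ≤ gaussianReal 0 v (Set.Ico t 0) + gaussianReal 0 v (Set.Ici 0) := measure_union_le _ _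
    _ ≤ ENNReal.ofReal ((-t) * (Real.sqrt (2*π*v))⁻¹) + ENNReal.ofReal (1/2) := by
        rw [h2]; exact add_le_add_left h1 _
    _ = ENNReal.ofReal (1/2 + (-t) * (Real.sqrt (2*π*v))⁻¹) := by
        rw [← ENNReal.ofReal_add (mul_nonneg (by linarith) (by positivity)) (by norm_num), add_comm]

set_option maxHeartbeats 4000000 in
/-- The Gaussian mechanism with noise scale
`σ > (Δf/ε)·√(2 log(1.25/δ))` is (ε, δ)-differentially private. -/
theorem stmt_5 {X : Type*} (Neighbor : X → X → Prop)
    (ε δ Δf σ : ℝ) (hε0 : 0 < ε) (hε1 : ε < 1) (hδ0 : 0 < δ) (hδ1 : δ < 1) (hΔf : 0 < Δf)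
    (f : X → ℝ)
    (hsens : ∀ D D', Neighbor D D' → |f D - f D'| ≤ Δf)
    (hσ : σ > (Δf / ε) * Real.sqrt (2 * Real.log (1.25 / δ))) :
    ∀ D D', Neighbor D D' → ∀ U : Set ℝ, MeasurableSet U →
      (gaussianReal 0 ⟨σ ^ 2, sq_nonneg σ⟩).map (fun z => f D + z) U ≤
        ENNReal.ofReal (Real.exp ε) *
          (gaussianReal 0 ⟨σ ^ 2, sq_nonneg σ⟩).map (fun z => f D' + z) U
        + ENNReal.ofReal δ := by
  intro D D' hND U hU
  have h125 : (1:ℝ) < 1.25 / δ := by rw [lt_div_iff₀ hδ0]; linarith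
  have hL : 0 < Real.log (1.25 / δ) := Real.log_pos h125
  obtain ⟨K, hKdef⟩ : ∃ K, K = Real.sqrt (2 * Real.log (1.25 / δ)) := ⟨_, rfl⟩
  rw [← hKdef] at hσ
  have hK : 0 < K := hKdef ▸ Real.sqrt_pos.2 (by positivity)
  have hK2 : K ^ 2 = 2 * Real.log (1.25 / δ) := hKdef ▸ Real.sq_sqrt (by positivity)
  have hσ0 : 0 < σ := lt_trans (by positivity) hσ
  have hσε : Δf * K < σ * ε := by
    have h := mul_lt_mul_of_pos_right hσ hε0
    have he : Δf / ε * K * ε = Δf * K := by field_simp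
    rw [he] at h
    exact h
  set v : ℝ≥0 := ⟨σ ^ 2, sq_nonneg σ⟩ with hvdef
  have hvR : (v : ℝ) = σ ^ 2 := rfl
  have hv : v ≠ 0 := by
    refine fun h => absurd (congrArg NNReal.toReal h) ?_
    rw [hvR]
    simp only [NNReal.coe_zero]
    positivity
  have hmapD : ∀ a : ℝ, (gaussianReal 0 v).map (fun z => a + z) = gaussianReal a v := by
    intro a
    rw [show (fun z => a + z) = (a + ·) from rfl, gaussianReal_map_const_add, zero_add]
  rw [hmapD, hmapD]
  set m := f D with hm
  set m' := f D' with hm'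
  obtain ⟨c, hc⟩ : ∃ c : ℝ, c = m - m' := ⟨_, rfl⟩
  have hcle : |c| ≤ Δf := by rw [hc]; exact hsens D D' hND
  by_cases hc0 : c = 0
  · have hmm : m = m' := by rw [← sub_eq_zero, ← hc]; exact hc0
    rw [hmm]
    calc gaussianReal m' v U = 1 * gaussianReal m' v U := (one_mul _).symm
      _ ≤ ENNReal.ofReal (rexp ε) * gaussianReal m' v U :=
          mul_le_mul_left (ENNReal.one_le_ofReal.2 (Real.one_le_exp hε0.le)) _
      _ ≤ _ := le_self_add
  · obtain ⟨G, hGdef⟩ : ∃ G : Set ℝ, G = {z | c * (2*z - m - m') ≤ 2 * σ^2 * ε} := ⟨_, rfl⟩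
    have hG : MeasurableSet G := by
      have : G = (fun z => c * (2*z - m - m')) ⁻¹' (Set.Iic (2 * σ^2 * ε)) := hGdef
      rw [this]
      exact (((measurable_id.const_mul 2).sub_const m).sub_const m').const_mul c
        measurableSet_Iic
    -- pointwise density bound on G
    have hpt : ∀ z ∈ G, gaussianPDFReal m v z ≤ rexp ε * gaussianPDFReal m' v z := by
      intro z hz
      have hzG : c * (2*z - m - m') ≤ 2 * σ^2 * ε := by rw [hGdef] at hz; exact hz
      unfold gaussianPDFReal
      have hkey : rexp (-(z - m)^2 / (2*v)) ≤ rexp ε * rexp (-(z - m')^2 / (2*v)) := by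
        rw [← Real.exp_add]
        refine Real.exp_le_exp.2 ?_
        rw [hvR]
        have h2σ : (0:ℝ) < 2 * σ^2 := by positivity
        have key2 : -(z - m)^2 ≤ 2*σ^2*ε + -(z - m')^2 := by
          have hcc : (z - m')^2 - (z - m)^2 = c*(2*z - m - m') := by rw [hc]; ring
          linarith [hzG, hcc]
        calc -(z - m)^2 / (2*σ^2) ≤ (2*σ^2*ε + -(z - m')^2) / (2*σ^2) :=
              (div_le_div_iff_of_pos_right h2σ).2 key2
          _ = ε + -(z - m')^2 / (2*σ^2) := by
              rw [add_div]
              congr 1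
              rw [mul_comm, mul_div_assoc, div_self (ne_of_gt h2σ), mul_one]
      calc (√(2*π*v))⁻¹ * rexp (-(z - m)^2 / (2*v))
          ≤ (√(2*π*v))⁻¹ * (rexp ε * rexp (-(z - m')^2 / (2*v))) :=
            mul_le_mul_of_nonneg_left hkey (by positivity)
        _ = rexp ε * ((√(2*π*v))⁻¹ * rexp (-(z - m')^2 / (2*v))) := by ring
    have claim1 : gaussianReal m v (U ∩ G) ≤ ENNReal.ofReal (rexp ε) * gaussianReal m' v U := by
      rw [gaussianReal_apply_eq_integral m hv]
      have hle : ∫ x in U ∩ G, gaussianPDFReal m v x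
          ≤ ∫ x in U ∩ G, rexp ε * gaussianPDFReal m' v x :=
        setIntegral_mono_on (integrable_gaussianPDFReal m v).integrableOn
          ((integrable_gaussianPDFReal m' v).const_mul _).integrableOn (hU.inter hG)
          (fun x hx => hpt x hx.2)
      rw [integral_const_mul] at hle
      calc ENNReal.ofReal (∫ x in U ∩ G, gaussianPDFReal m v x)
          ≤ ENNReal.ofReal (rexp ε * ∫ x in U ∩ G, gaussianPDFReal m' v x) :=
            ENNReal.ofReal_le_ofReal hle
        _ = ENNReal.ofReal (rexp ε) * ENNReal.ofReal (∫ x in U ∩ G, gaussianPDFReal m' v x) :=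
            ENNReal.ofReal_mul (Real.exp_pos ε).le
        _ = ENNReal.ofReal (rexp ε) * gaussianReal m' v (U ∩ G) := by
            rw [gaussianReal_apply_eq_integral m' hv]
        _ ≤ ENNReal.ofReal (rexp ε) * gaussianReal m' v U :=
            mul_le_mul_right (measure_mono Set.inter_subset_left) _
    -- bad-event bound
    obtain ⟨b, hb⟩ : ∃ b : ℝ, b = |c| := ⟨_, rfl⟩
    have hb0 : 0 < b := by rw [hb]; exact abs_pos.2 hc0
    have hb2 : b ^ 2 = c ^ 2 := by rw [hb]; exact sq_abs c
    obtain ⟨A, hA⟩ : ∃ A : ℝ, A = σ^2*ε - b^2/2 := ⟨_, rfl⟩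
    have hGc : gaussianReal m v Gᶜ = gaussianReal 0 v (Set.Ioi (A / b)) := by
      have hmapm : gaussianReal m v = (gaussianReal 0 v).map (m + ·) := by
        rw [gaussianReal_map_const_add, zero_add]
      rw [hmapm, Measure.map_apply (measurable_const_add m) hG.compl]
      have hpre : (m + ·) ⁻¹' Gᶜ = {z | A < c * z} := by
        ext z
        simp only [Set.mem_preimage, Set.mem_compl_iff, hGdef, Set.mem_setOf_eq, not_le]
        have hexp : c * (2*(m + z) - m - m') = 2*(c*z) + c^2 := by rw [hc]; ring
        rw [hexp, hA]
        constructor <;> intro h <;> nlinarith [hb2]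
      rw [hpre]
      rcases (lt_or_gt_of_ne hc0) with hneg | hpos
      · have hbc : b = -c := by rw [hb]; exact abs_of_neg hneg
        have hSmeas : MeasurableSet {z : ℝ | A < c * z} :=
          measurableSet_lt measurable_const (measurable_id.const_mul c)
        rw [← gauss_neg_inv hv hSmeas]
        congr 1
        ext z
        simp only [Set.mem_preimage, Set.mem_setOf_eq, Set.mem_Ioi]
        rw [div_lt_iff₀ hb0, hbc]
        constructor <;> intro h <;> nlinarith
      · have hbc : b = c := by rw [hb]; exact abs_of_pos hpos
        congr 1
        ext z
        simp only [Set.mem_setOf_eq, Set.mem_Ioi]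
        rw [div_lt_iff₀ hb0, hbc]
        constructor <;> intro h <;> nlinarith
    obtain ⟨t, htdef⟩ : ∃ t : ℝ, t = σ^2*ε/Δf - Δf/2 := ⟨_, rfl⟩
    have htΔ : t * Δf = σ^2*ε - Δf^2/2 := by rw [htdef]; field_simp
    have hbΔ : b ≤ Δf := by rw [hb]; exact hcle
    have claim2 : gaussianReal m v Gᶜ ≤ ENNReal.ofReal δ := by
      rw [hGc]
      have htle : t ≤ A / b := by
        rw [le_div_iff₀ hb0, hA, htdef]
        have hq : (0:ℝ) ≤ σ^2*ε/Δf := by positivity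
        have hfd : σ^2*ε/Δf * Δf = σ^2*ε := div_mul_cancel₀ _ hΔf.ne'
        nlinarith [mul_nonneg hq (sub_nonneg.2 hbΔ), mul_nonneg hb0.le (sub_nonneg.2 hbΔ)]
      have hsub2 : Set.Ioi (A / b) ⊆ Set.Ici t := fun z hz => le_trans htle (le_of_lt hz)
      refine le_trans (measure_mono hsub2) ?_
      by_cases hts : 0 ≤ t
      · refine le_trans (gauss_tail_nonneg hv hts) (ENNReal.ofReal_le_ofReal ?_)
        -- show rexp (-t^2/(2v)) * (1/2) ≤ δ
        have hE : σ^2 * (K^2 - 1) ≤ t^2 := by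
          by_cases hKc : K^2 ≤ 1
          · nlinarith [sq_nonneg t, mul_nonneg (sq_nonneg σ) (sub_nonneg.2 hKc)]
          · push_neg at hKc
            have hεσ : σ * ε ≤ σ := by nlinarith
            have hΔσ : Δf * K < σ := lt_of_lt_of_le hσε hεσ
            have hP : σ*K - Δf/2 ≤ t := by
              nlinarith [mul_lt_mul_of_pos_left hσε hσ0]
            have h2K : σ * (2*K^2 - 1) ≤ 2*K*t := by
              nlinarith [mul_le_mul_of_nonneg_left hP (by positivity : (0:ℝ) ≤ 2*K)]
            nlinarith [sq_nonneg (2*K*t - σ*(2*K^2 - 1)), mul_pos hK hK, sq_nonneg σ,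
              mul_nonneg (mul_nonneg hσ0.le (by nlinarith : (0:ℝ) ≤ 2*K^2 - 1))
                (sub_nonneg.2 h2K)]
        have hexp1 : rexp (-t^2 / (2*v)) ≤ rexp ((1 - K^2)/2) := by
          refine Real.exp_le_exp.2 ?_
          rw [hvR, div_le_div_iff₀ (by positivity) (by norm_num)]
          nlinarith [hE]
        have hexpval : rexp ((1 - K^2)/2) = rexp (1/2) * (δ / 1.25) := by
          rw [show (1 - K^2)/2 = 1/2 + -(K^2/2) by ring, Real.exp_add]
          congr 1
          rw [hK2, show -(2 * Real.log (1.25/δ) / 2) = -Real.log (1.25/δ) by ring,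
            Real.exp_neg, Real.exp_log (by positivity)]
          rw [inv_div]
        have hehalf : rexp (1/2) ≤ 2.5 := by
          have hsq : rexp (1/2) * rexp (1/2) = rexp 1 := by
            rw [← Real.exp_add]; norm_num
          nlinarith [Real.exp_pos (1/2), Real.exp_one_lt_d9]
        calc rexp (-t^2/(2*v)) * (1/2) ≤ (rexp (1/2) * (δ/1.25)) * (1/2) := by
              rw [← hexpval]
              exact mul_le_mul_of_nonneg_right hexp1 (by norm_num)
          _ ≤ (2.5 * (δ/1.25)) * (1/2) := by
              have : (0:ℝ) ≤ δ/1.25 := by positivity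
              nlinarith
          _ = δ := by ring
      · push_neg at hts
        refine le_trans (gauss_tail_negt hv hts) (ENNReal.ofReal_le_ofReal ?_)
        -- show 1/2 + (-t) * (√(2πv))⁻¹ ≤ δ
        have htneg : σ^2*ε < Δf^2/2 := by nlinarith [htΔ]
        have hK12 : K^2 < 1/2 := by
          have hsq : Δf^2*K^2 < σ^2*ε := by
            have h1 : (Δf*K)*(Δf*K) < (σ*ε)*(σ*ε) :=
              mul_lt_mul'' hσε hσε (by positivity) (by positivity)
            nlinarith [h1, mul_nonneg (sq_nonneg σ) (mul_nonneg hε0.le (sub_nonneg.2 hε1.le))]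
          nlinarith [mul_pos hΔf hΔf]
        have hδlb : 1.25 * (3/4) ≤ δ := by
          have hLlt : Real.log (1.25/δ) < 1/4 := by nlinarith [hK2]
          have : (1.25:ℝ)/δ < rexp (1/4) := by
            calc (1.25:ℝ)/δ = rexp (Real.log (1.25/δ)) := (Real.exp_log (by positivity)).symm
              _ < rexp (1/4) := Real.exp_lt_exp.2 hLlt
          have hexp14 : rexp (1/4) ≤ 4/3 := by
            have h34 : (3/4 : ℝ) ≤ rexp (-(1/4)) := by
              have := Real.add_one_le_exp (-(1/4) : ℝ)
              linarith
            have hpos := Real.exp_pos (-(1/4) : ℝ)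
            have : rexp (1/4) = (rexp (-(1/4)))⁻¹ := by
              rw [← Real.exp_neg]; norm_num
            rw [this]
            rw [inv_le_comm₀ (by positivity) (by norm_num)]
            linarith
          have h1 : (1.25:ℝ)/δ < 4/3 := lt_of_lt_of_le this hexp14
          rw [div_lt_iff₀ hδ0] at h1
          linarith
        have hK04 : (0.4:ℝ) < K^2 := by
          rw [hK2]
          have hlog125 : (0.2:ℝ) ≤ Real.log 1.25 := by
            rw [Real.le_log_iff_exp_le (by norm_num)]
            have := Real.add_one_le_exp (-(0.2) : ℝ)
            have hpos := Real.exp_pos (-(0.2) : ℝ)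
            have hinv : rexp (0.2) = (rexp (-(0.2)))⁻¹ := by rw [← Real.exp_neg]; norm_num
            rw [hinv, inv_le_comm₀ (by positivity) (by norm_num)]
            linarith
          have hloglt : Real.log 1.25 < Real.log (1.25/δ) := by
            apply Real.log_lt_log (by norm_num)
            rw [lt_div_iff₀ hδ0]
            nlinarith
          linarith
        have hK063 : (0.632:ℝ) < K := by nlinarith
        have hΔσ2 : 0.632 * Δf < σ := by
          have hεσ : σ * ε ≤ σ := by nlinarith
          nlinarith [hσε]
        have hw0 : (0:ℝ) ≤ (√(2*π*v))⁻¹ := by positivity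
        have hsqrt : (2.5:ℝ) * σ ≤ √(2*π*(v:ℝ)) := by
          rw [hvR]
          have h625 : ((2.5:ℝ)*σ)^2 ≤ 2*π*σ^2 := by nlinarith [Real.pi_gt_d6, sq_nonneg σ]
          calc (2.5:ℝ)*σ = √(((2.5:ℝ)*σ)^2) := (Real.sqrt_sq (by positivity)).symm
            _ ≤ √(2*π*σ^2) := Real.sqrt_le_sqrt h625
        have hwle : (√(2*π*(v:ℝ)))⁻¹ ≤ ((2.5:ℝ)*σ)⁻¹ := by
          apply inv_anti₀ (by positivity) hsqrt
        have hmt : -t ≤ Δf/2 := by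
          have : (0:ℝ) ≤ σ^2*ε/Δf := by positivity
          rw [htdef]; linarith
        have hstep : (-t) * (√(2*π*(v:ℝ)))⁻¹ ≤ (Δf/2) * ((2.5:ℝ)*σ)⁻¹ := by
          apply mul_le_mul hmt hwle hw0 (by linarith)
        have hfin : (Δf/2) * ((2.5:ℝ)*σ)⁻¹ ≤ 0.32 := by
          rw [show (Δf/2) * ((2.5:ℝ)*σ)⁻¹ = Δf / (5*σ) by
              rw [mul_inv, div_mul_eq_mul_div, div_mul_eq_div_div]; norm_num; ring,
            div_le_iff₀ (by positivity)]
          nlinarith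
        have := le_trans hstep hfin
        linarith
    -- combine
    have hsplit : gaussianReal m v U ≤ gaussianReal m v (U ∩ G) + gaussianReal m v Gᶜ := by
      refine le_trans (measure_mono ?_) (measure_union_le _ _)
      intro z hz
      by_cases hzG : z ∈ G
      · exact Or.inl ⟨hz, hzG⟩
      · exact Or.inr hzG
    exact le_trans hsplit (add_le_add claim1 claim2)
end

section
/- For decreasing positive reals Δ_1 ≥ Δ_2 ≥ ... ≥ Δ_K > 0, the telescoping-type sum Δ_1·(1/Δ_1²) + ∑_{k=2}^K Δ_k·(1/Δ_k² − 1/Δ_{k−1}²) is at most 2/Δ_K. -/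
open Finset

lemma aux_stmt_9 : ∀ K : ℕ, 1 ≤ K → ∀ Δ : ℕ → ℝ,
    (∀ k < K, 0 < Δ k) → (∀ i j : ℕ, i ≤ j → j < K → Δ j ≤ Δ i) →
    Δ 0 * (1 / (Δ 0) ^ 2) +
        ∑ k ∈ Finset.Ico 1 K, Δ k * (1 / (Δ k) ^ 2 - 1 / (Δ (k - 1)) ^ 2)
      ≤ 2 / Δ (K - 1) := by
  intro K hK
  induction K, hK using Nat.le_induction with
  | base =>
    intro Δ hpos hmono
    simp only [Finset.Ico_self, Finset.sum_empty, add_zero]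
    have h0 : 0 < Δ 0 := hpos 0 (by norm_num)
    have e : Δ 0 * (1 / Δ 0 ^ 2) = 1 / Δ 0 := by
      field_simp
    rw [show (1:ℕ) - 1 = 0 from rfl, e, div_le_div_iff₀ h0 h0]
    nlinarith
  | succ K hK ih =>
    intro Δ hpos hmono
    have hposK : ∀ k < K, 0 < Δ k := fun k hk => hpos k (by omega)
    have hmonoK : ∀ i j : ℕ, i ≤ j → j < K → Δ j ≤ Δ i :=
      fun i j hij hj => hmono i j hij (by omega)
    have hIH := ih Δ hposK hmonoK
    rw [Finset.sum_Ico_succ_top (by omega)]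
    have hK1 : 0 < Δ (K - 1) := hpos (K - 1) (by omega)
    have hKK : 0 < Δ K := hpos K (by omega)
    have hle : Δ K ≤ Δ (K - 1) := hmono (K - 1) K (by omega) (by omega)
    simp only [Nat.add_sub_cancel]
    have key : Δ K * (1 / Δ K ^ 2 - 1 / Δ (K - 1) ^ 2) ≤ 2 / Δ K - 2 / Δ (K - 1) := by
      have e : Δ K * (1 / Δ K ^ 2 - 1 / Δ (K - 1) ^ 2)
          = 1 / Δ K - Δ K / Δ (K - 1) ^ 2 := by
        field_simp
      rw [e]
      have h2 : 2 / Δ (K - 1) ≤ 1 / Δ K + Δ K / Δ (K - 1) ^ 2 := by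
        rw [div_add_div _ _ (ne_of_gt hKK) (by positivity : (Δ (K-1):ℝ)^2 ≠ 0),
          div_le_div_iff₀ hK1 (by positivity)]
        nlinarith [sq_nonneg (Δ (K - 1) - Δ K)]
      have h3 : 2 / Δ K = 2 * (1 / Δ K) := by ring
      have h4 : 2 / Δ (K - 1) = 2 * (1 / Δ (K - 1)) := by ring
      have h5 : (1:ℝ) / Δ (K - 1) ≤ 1 / Δ K := by
        apply one_div_le_one_div_of_le hKK hle
      linarith
    linarith

/-- Telescoping-type bound: for decreasing positive gaps `Δ_1 ≥ ... ≥ Δ_K > 0`,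
`Δ_1/Δ_1² + ∑_{k≥2} Δ_k (1/Δ_k² - 1/Δ_{k-1}²) ≤ 2/Δ_K`. -/
theorem stmt_9 (K : ℕ) (hK : 0 < K) (Δ : ℕ → ℝ)
    (hpos : ∀ k < K, 0 < Δ k)
    (hmono : ∀ i j : ℕ, i ≤ j → j < K → Δ j ≤ Δ i) :
    Δ 0 * (1 / (Δ 0) ^ 2) +
        ∑ k ∈ Finset.Ico 1 K, Δ k * (1 / (Δ k) ^ 2 - 1 / (Δ (k - 1)) ^ 2)
      ≤ 2 / Δ (K - 1) :=
  aux_stmt_9 K hK Δ hpos hmono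
end

section
/- For the generalized telescoping sum with exponent 1+ξ (ξ ≥ 0): if Δ_1 ≥ ... ≥ Δ_K > 0 then Δ_1/Δ_1^{1+ξ} + ∑_{k=2}^K Δ_k·(1/Δ_k^{1+ξ} − 1/Δ_{k−1}^{1+ξ}) ≤ (1+ξ)/(ξ·Δ_K^ξ) when ξ > 0, and in particular this sum is at most C/Δ_K^ξ for C = (1+ξ)/ξ. -/
open Finset Real

lemma bernoulli_aux (ξ t : ℝ) (hξ : 0 < ξ) (ht : 0 < t) :
    1 + ξ * (1 - t) ≤ t ^ (-ξ) := by
  have h1 : t ^ (-ξ) = Real.exp (-ξ * Real.log t) := by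
    rw [Real.rpow_def_of_pos ht]; ring_nf
  have h2 : (-ξ * Real.log t) + 1 ≤ Real.exp (-ξ * Real.log t) :=
    Real.add_one_le_exp _
  have h3 : Real.log t ≤ t - 1 := Real.log_le_sub_one_of_pos ht
  have : ξ * (1 - t) ≤ -ξ * Real.log t := by nlinarith
  linarith [h1 ▸ h2]

lemma key_aux (ξ a b : ℝ) (hξ : 0 < ξ) (hb : 0 < b) (hab : b ≤ a) :
    b * (1 / b ^ (1 + ξ) - 1 / a ^ (1 + ξ)) ≤ (1 + ξ) / ξ * (1 / b ^ ξ - 1 / a ^ ξ) := by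
  have ha : 0 < a := lt_of_lt_of_le hb hab
  have hx : (0:ℝ) < a ^ ξ := Real.rpow_pos_of_pos ha ξ
  have hy : (0:ℝ) < b ^ ξ := Real.rpow_pos_of_pos hb ξ
  have hber : 1 + ξ * (1 - b / a) ≤ (b / a) ^ (-ξ) :=
    bernoulli_aux _ _ hξ (div_pos hb ha)
  have hba : (b / a) ^ (-ξ) = a ^ ξ / b ^ ξ := by
    rw [Real.rpow_neg (le_of_lt (div_pos hb ha)), Real.div_rpow hb.le ha.le, inv_div]
  rw [hba] at hber
  have key : a * (b ^ ξ) + ξ * (a - b) * (b ^ ξ) ≤ a * (a ^ ξ) := by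
    have h1 := mul_le_mul_of_nonneg_right hber (by positivity : (0:ℝ) ≤ a * b ^ ξ)
    calc a * (b ^ ξ) + ξ * (a - b) * (b ^ ξ)
        = (1 + ξ * (1 - b / a)) * (a * b ^ ξ) := by field_simp
      _ ≤ (a ^ ξ / b ^ ξ) * (a * b ^ ξ) := h1
      _ = a * a ^ ξ := by field_simp
  have ha1 : a ^ (1 + ξ) = a * a ^ ξ := by rw [Real.rpow_add ha, Real.rpow_one]
  have hb1 : b ^ (1 + ξ) = b * b ^ ξ := by rw [Real.rpow_add hb, Real.rpow_one]
  rw [ha1, hb1]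
  rw [div_sub_div _ _ (by positivity : b * b^ξ ≠ 0) (by positivity : a * a^ξ ≠ 0),
    div_sub_div _ _ (by positivity : (b:ℝ)^ξ ≠ 0) (by positivity : (a:ℝ)^ξ ≠ 0),
    mul_div_assoc', div_mul_div_comm, div_le_div_iff₀ (by positivity) (by positivity)]
  ring_nf
  nlinarith [key, mul_pos hx hy, mul_pos ha hb, mul_pos (mul_pos ha hb) (mul_pos hx hy),
    mul_pos hy (mul_pos ha hb), mul_le_mul_of_nonneg_right key (mul_pos (mul_pos ha hb) hy).le,
    mul_le_mul_of_nonneg_right key (mul_pos hb hy).le]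

lemma tele_aux (f : ℕ → ℝ) (K : ℕ) (hK : 0 < K) :
    ∑ k ∈ Finset.Ico 1 K, (f k - f (k - 1)) = f (K - 1) - f 0 := by
  induction K with
  | zero => omega
  | succ n ih =>
    rcases Nat.eq_zero_or_pos n with h | h
    · subst h; simp
    · rw [Finset.sum_Ico_succ_top (by omega), ih h, Nat.add_sub_cancel]
      ring

/-- Generalized telescoping bound with exponent `1 + ξ`, `ξ > 0`:
`Δ_1/Δ_1^{1+ξ} + ∑_{k≥2} Δ_k (1/Δ_k^{1+ξ} - 1/Δ_{k-1}^{1+ξ}) ≤ (1+ξ)/(ξ Δ_K^ξ)`. -/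
theorem stmt_10 (K : ℕ) (hK : 0 < K) (ξ : ℝ) (hξ : 0 < ξ) (Δ : ℕ → ℝ)
    (hpos : ∀ k < K, 0 < Δ k)
    (hmono : ∀ i j : ℕ, i ≤ j → j < K → Δ j ≤ Δ i) :
    Δ 0 / (Δ 0) ^ (1 + ξ) +
        ∑ k ∈ Finset.Ico 1 K, Δ k * (1 / (Δ k) ^ (1 + ξ) - 1 / (Δ (k - 1)) ^ (1 + ξ))
      ≤ (1 + ξ) / (ξ * (Δ (K - 1)) ^ ξ) := by
  set C : ℝ := (1 + ξ) / ξ with hC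
  set f : ℕ → ℝ := fun k => 1 / (Δ k) ^ ξ with hf
  have hsum : ∑ k ∈ Finset.Ico 1 K, Δ k * (1 / (Δ k) ^ (1 + ξ) - 1 / (Δ (k - 1)) ^ (1 + ξ))
      ≤ ∑ k ∈ Finset.Ico 1 K, C * (f k - f (k - 1)) := by
    apply Finset.sum_le_sum
    intro k hk
    simp only [Finset.mem_Ico] at hk
    have hk1 : k - 1 < K := by omega
    have hkK : k < K := hk.2
    have hle : Δ k ≤ Δ (k - 1) := hmono (k - 1) k (by omega) hkK
    have := key_aux ξ (Δ (k - 1)) (Δ k) hξ (hpos k hkK) hle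
    simpa [hf, hC, mul_sub] using this
  have htel : ∑ k ∈ Finset.Ico 1 K, C * (f k - f (k - 1)) = C * (f (K - 1) - f 0) := by
    rw [← Finset.mul_sum, tele_aux f K hK]
  have hΔ0 : 0 < Δ 0 := hpos 0 hK
  have hΔK : 0 < Δ (K - 1) := hpos (K - 1) (by omega)
  have hx0 : (0:ℝ) < (Δ 0) ^ ξ := Real.rpow_pos_of_pos hΔ0 ξ
  have hxK : (0:ℝ) < (Δ (K - 1)) ^ ξ := Real.rpow_pos_of_pos hΔK ξ
  have h0 : Δ 0 / (Δ 0) ^ (1 + ξ) = f 0 := by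
    rw [hf]
    simp only
    rw [Real.rpow_add hΔ0, Real.rpow_one]
    field_simp
  have hC1 : 1 ≤ C := by
    rw [hC, le_div_iff₀ hξ]; linarith
  have hfin : f 0 + C * (f (K - 1) - f 0) ≤ (1 + ξ) / (ξ * (Δ (K - 1)) ^ ξ) := by
    have hrhs : (1 + ξ) / (ξ * (Δ (K - 1)) ^ ξ) = C * f (K - 1) := by
      rw [hC, hf]
      field_simp
    rw [hrhs]
    have hf0 : 0 < f 0 := by rw [hf]; positivity
    nlinarith
  calc Δ 0 / (Δ 0) ^ (1 + ξ) +
        ∑ k ∈ Finset.Ico 1 K, Δ k * (1 / (Δ k) ^ (1 + ξ) - 1 / (Δ (k - 1)) ^ (1 + ξ))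
      ≤ f 0 + C * (f (K - 1) - f 0) := by rw [h0, ← htel]; linarith [hsum]
    _ ≤ _ := hfin
end
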